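/- Let Φ be a reversible, Lebesgue-measure-preserving bijection of phase space Z = ℝ^d × ℝ^d, ρ a strictly positive F-invariant density, and let D be the Markov kernel that from state z moves to Φ^k(z) with probability p^{(k)}(z) = Σ^{(k)}(z) − Σ^{(k−1)}(z) for k = 1, ..., K+1 (where Σ^{(k)}(z) = min(1, max_{1 ≤ j ≤ k} ρ(Φ^j(z))/ρ(z)), Σ^{(0)} = 0) and to F(z) with probability 1 − Σ^{(K+1)}(z). Then D satisfies modified detailed balance with respect to ρ: for all bounded measurable f, ∫ ρ(z) E[f(z, D(z))] dz = ∫ ρ(F(z')) E[f(F(D(F(z'))), z')] dz', and consequently ρ is an invariant density of D. -/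

import Mathlib

open MeasureTheory

/-- Phase space `ℝ^d × ℝ^d`. -/
abbrev PhaseSpace (d : ℕ) := ((Fin d → ℝ) × (Fin d → ℝ))

/-- The momentum flip `F(x,y) = (x,-y)`. -/
def flipMap (d : ℕ) : PhaseSpace d → PhaseSpace d := fun z => (z.1, -z.2)


lemma flipMap_flipMap {d : ℕ} (z : PhaseSpace d) : flipMap d (flipMap d z) = z := by
  simp [flipMap]

lemma flip_measurable {d : ℕ} : Measurable (flipMap d) :=
  measurable_fst.prodMk measurable_snd.neg

lemma flip_mp {d : ℕ} :
    MeasurePreserving (flipMap d) (volume : Measure (PhaseSpace d)) volume := by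
  have h : flipMap d = Prod.map (id : (Fin d → ℝ) → (Fin d → ℝ)) (fun y => -y) := rfl
  rw [h, Measure.volume_eq_prod]
  exact (MeasurePreserving.id _).prod (Measure.measurePreserving_neg _)

section rev
variable {d : ℕ} {Φ : PhaseSpace d → PhaseSpace d}
  (hΦrev : ∀ z, Φ (flipMap d (Φ (flipMap d z))) = z)
include hΦrev

lemma rev_left (w : PhaseSpace d) : flipMap d (Φ (flipMap d (Φ w))) = w := by
  have h := hΦrev (flipMap d w)
  rw [flipMap_flipMap] at h
  rw [h, flipMap_flipMap]

omit hΦrev in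
lemma rev_semiconj :
    Function.Semiconj (flipMap d) Φ (fun z => flipMap d (Φ (flipMap d z))) := by
  intro x
  simp only [flipMap_flipMap]

omit hΦrev in
lemma flip_iter (k : ℕ) (z : PhaseSpace d) :
    flipMap d (Φ^[k] z) = (fun z => flipMap d (Φ (flipMap d z)))^[k] (flipMap d z) :=
  (rev_semiconj (Φ := Φ)).iterate_right k z

omit hΦrev in
lemma iter_flip (k : ℕ) (z : PhaseSpace d) :
    Φ^[k] (flipMap d z) = flipMap d ((fun z => flipMap d (Φ (flipMap d z)))^[k] z) := by
  have := flip_iter (Φ := Φ) k (flipMap d z)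
  rw [flipMap_flipMap] at this
  rw [← this, flipMap_flipMap]

lemma inv_cancel (k : ℕ) (z : PhaseSpace d) :
    (fun z => flipMap d (Φ (flipMap d z)))^[k] (Φ^[k] z) = z := by
  have hli : Function.LeftInverse (fun z => flipMap d (Φ (flipMap d z))) Φ :=
    fun w => rev_left hΦrev w
  exact hli.iterate k z

lemma inv_iter_of_le {j k : ℕ} (hjk : j ≤ k) (z : PhaseSpace d) :
    (fun z => flipMap d (Φ (flipMap d z)))^[j] (Φ^[k] z) = Φ^[k - j] z := by
  have h : Φ^[k] z = Φ^[j] (Φ^[k - j] z) := by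
    rw [← Function.iterate_add_apply]
    congr 1; omega
  rw [h, inv_cancel hΦrev]

lemma iter_flip_iter {j k : ℕ} (hjk : j ≤ k) (z : PhaseSpace d) :
    Φ^[j] (flipMap d (Φ^[k] z)) = flipMap d (Φ^[k - j] z) := by
  rw [iter_flip (Φ := Φ), inv_iter_of_le hΦrev hjk]

end rev

/-- Accumulated acceptance probability
`Σ^{(k)}(z) = min(1, max_{1 ≤ j ≤ k} ρ(Φ^j z)/ρ(z))`, with `Σ^{(0)} = 0`. -/
noncomputable def Sig {d : ℕ} (Φ : PhaseSpace d → PhaseSpace d)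
    (ρ : PhaseSpace d → ℝ) (k : ℕ) (z : PhaseSpace d) : ℝ :=
  if h : 1 ≤ k then
    min 1 ((Finset.Icc 1 k).sup' (Finset.nonempty_Icc.mpr h)
      fun j => ρ (Φ^[j] z) / ρ z)
  else 0

/-- Acceptance probability of the `k`-th extra-chance proposal:
`p^{(k)}(z) = Σ^{(k)}(z) - Σ^{(k-1)}(z)`. -/
noncomputable def pAcc {d : ℕ} (Φ : PhaseSpace d → PhaseSpace d)
    (ρ : PhaseSpace d → ℝ) (k : ℕ) (z : PhaseSpace d) : ℝ :=
  Sig Φ ρ k z - Sig Φ ρ (k - 1) z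


section sig
variable {d : ℕ} (Φ : PhaseSpace d → PhaseSpace d) (ρ : PhaseSpace d → ℝ)

lemma sig_mul (hρpos : ∀ z, 0 < ρ z) {k : ℕ} (hk : 1 ≤ k) (z : PhaseSpace d) :
    ρ z * Sig Φ ρ k z =
      min (ρ z) ((Finset.Icc 1 k).sup' (Finset.nonempty_Icc.mpr hk)
        fun j => ρ (Φ^[j] z)) := by
  have h0 := (hρpos z).le
  rw [Sig, dif_pos hk, mul_min_of_nonneg _ _ h0, mul_one,
    Finset.comp_sup'_eq_sup'_comp _ (fun x => ρ z * x)
      (fun x y => mul_max_of_nonneg x y h0)]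
  congr 1
  refine Finset.sup'_congr _ rfl (fun j _ => ?_)
  simp only [Function.comp]
  rw [mul_comm, div_mul_cancel₀ _ (hρpos z).ne']

lemma sig_nonneg (hρpos : ∀ z, 0 < ρ z) (k : ℕ) (z : PhaseSpace d) :
    0 ≤ Sig Φ ρ k z := by
  rw [Sig]
  split
  · next h =>
    refine le_min one_pos.le ?_
    refine le_trans ?_ (Finset.le_sup' _ (Finset.mem_Icc.mpr ⟨le_refl 1, h⟩))
    exact div_nonneg (hρpos _).le (hρpos z).le
  · exact le_refl 0

lemma sig_le_one (k : ℕ) (z : PhaseSpace d) : Sig Φ ρ k z ≤ 1 := by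
  rw [Sig]; split
  · exact min_le_left _ _
  · exact zero_le_one

lemma sig_mono (hρpos : ∀ z, 0 < ρ z) {k l : ℕ} (hkl : k ≤ l) (z : PhaseSpace d) :
    Sig Φ ρ k z ≤ Sig Φ ρ l z := by
  by_cases hk : 1 ≤ k
  · have hl : 1 ≤ l := le_trans hk hkl
    rw [Sig, dif_pos hk, Sig, dif_pos hl]
    exact min_le_min (le_refl 1)
      (Finset.sup'_mono _ (Finset.Icc_subset_Icc_right hkl) _)
  · have hk0 : k = 0 := by omega
    rw [hk0]
    simpa [Sig] using sig_nonneg Φ ρ hρpos l z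

lemma pAcc_nonneg (hρpos : ∀ z, 0 < ρ z) (k : ℕ) (z : PhaseSpace d) :
    0 ≤ pAcc Φ ρ k z := by
  rw [pAcc, sub_nonneg]
  exact sig_mono Φ ρ hρpos (Nat.sub_le k 1) z

lemma sig_measurable (hρm : Measurable ρ) (hΦm : Measurable Φ) (k : ℕ) :
    Measurable (Sig Φ ρ k) := by
  by_cases hk : 1 ≤ k
  · have h : Sig Φ ρ k = fun z => min 1 ((Finset.Icc 1 k).sup'
        (Finset.nonempty_Icc.mpr hk) fun j => ρ (Φ^[j] z) / ρ z) := by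
      funext z; rw [Sig, dif_pos hk]
    rw [h]
    have hm : Measurable ((Finset.Icc 1 k).sup' (Finset.nonempty_Icc.mpr hk)
        (fun j z => ρ (Φ^[j] z) / ρ z)) :=
      Finset.measurable_sup' _ (fun j _ => (hρm.comp (hΦm.iterate j)).div hρm)
    have h2 : (fun z => ((Finset.Icc 1 k).sup' (Finset.nonempty_Icc.mpr hk)
        fun j => ρ (Φ^[j] z) / ρ z)) = (Finset.Icc 1 k).sup'
        (Finset.nonempty_Icc.mpr hk) (fun j z => ρ (Φ^[j] z) / ρ z) := by
      funext z; rw [Finset.sup'_apply]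
    exact measurable_const.min (h2 ▸ hm)
  · have h : Sig Φ ρ k = fun _ => (0:ℝ) := by funext z; rw [Sig, dif_neg hk]
    rw [h]
    exact measurable_const

lemma pAcc_measurable (hρm : Measurable ρ) (hΦm : Measurable Φ) (k : ℕ) :
    Measurable (pAcc Φ ρ k) :=
  (sig_measurable Φ ρ hρm hΦm k).sub (sig_measurable Φ ρ hρm hΦm (k - 1))

end sig

lemma sup'_reindex (g : ℕ → ℝ) {k m n : ℕ} (hmn : m ≤ n) (hnk : n ≤ k) :
    (Finset.Icc m n).sup' (Finset.nonempty_Icc.mpr hmn) (fun j => g (k - j)) =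
    (Finset.Icc (k - n) (k - m)).sup'
      (Finset.nonempty_Icc.mpr (by omega)) g := by
  apply le_antisymm
  · apply Finset.sup'_le
    intro j hj
    simp only [Finset.mem_Icc] at hj
    exact Finset.le_sup' g (Finset.mem_Icc.mpr (by omega))
  · apply Finset.sup'_le
    intro i hi
    simp only [Finset.mem_Icc] at hi
    have h : g i = g (k - (k - i)) := by congr 1; omega
    rw [h]
    exact Finset.le_sup' (fun j => g (k - j)) (Finset.mem_Icc.mpr (by omega))

lemma minmax_id (a b M : ℝ) :
    min a (b ⊔ M) - min a M = min b (a ⊔ M) - min b M := by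
  simp only [min_def, max_def]
  split_ifs <;> linarith

lemma sup'_split_top (g : ℕ → ℝ) {k : ℕ} (hk : 2 ≤ k) :
    (Finset.Icc 1 k).sup' (Finset.nonempty_Icc.mpr (by omega)) g =
      g k ⊔ (Finset.Icc 1 (k-1)).sup' (Finset.nonempty_Icc.mpr (by omega)) g := by
  apply le_antisymm
  · apply Finset.sup'_le
    intro j hj
    simp only [Finset.mem_Icc] at hj
    rcases eq_or_lt_of_le hj.2 with h|h
    · exact le_trans (le_of_eq (congrArg g h)) le_sup_left
    · exact le_trans (Finset.le_sup' g (Finset.mem_Icc.mpr (by omega))) le_sup_right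
  · apply sup_le
    · exact Finset.le_sup' g (Finset.mem_Icc.mpr (by omega))
    · exact le_trans (le_refl _)
        (Finset.sup'_mono g (Finset.Icc_subset_Icc_right (by omega)) _)

lemma sup'_split_bot (g : ℕ → ℝ) {k : ℕ} (hk : 2 ≤ k) :
    (Finset.Icc 0 (k-1)).sup' (Finset.nonempty_Icc.mpr (by omega)) g =
      g 0 ⊔ (Finset.Icc 1 (k-1)).sup' (Finset.nonempty_Icc.mpr (by omega)) g := by
  apply le_antisymm
  · apply Finset.sup'_le
    intro j hj
    simp only [Finset.mem_Icc] at hj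
    rcases Nat.eq_zero_or_pos j with h|h
    · exact le_trans (le_of_eq (congrArg g h.symm).symm) le_sup_left
    · exact le_trans (Finset.le_sup' g (Finset.mem_Icc.mpr (by omega))) le_sup_right
  · apply sup_le
    · exact Finset.le_sup' g (Finset.mem_Icc.mpr (by omega))
    · exact Finset.sup'_mono g (Finset.Icc_subset_Icc (by omega) (le_refl _)) _

lemma key_identity {d : ℕ} {Φ : PhaseSpace d → PhaseSpace d} {ρ : PhaseSpace d → ℝ}
    (hΦrev : ∀ z, Φ (flipMap d (Φ (flipMap d z))) = z)
    (hρpos : ∀ z, 0 < ρ z) (hρF : ∀ z, ρ (flipMap d z) = ρ z)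
    {k : ℕ} (hk : 1 ≤ k) (z : PhaseSpace d) :
    ρ z * pAcc Φ ρ k z = ρ (Φ^[k] z) * pAcc Φ ρ k (flipMap d (Φ^[k] z)) := by
  set w := flipMap d (Φ^[k] z) with hw
  have hrw : ∀ j ≤ k, ρ (Φ^[j] w) = ρ (Φ^[k - j] z) := by
    intro j hj
    rw [hw, iter_flip_iter hΦrev hj z, hρF]
  rcases eq_or_lt_of_le hk with h1 | h2
  · -- k = 1
    subst h1
    have hρw : ρ w = ρ (Φ^[1] z) := by rw [hw, hρF]
    have e1 : ρ z * Sig Φ ρ 1 z = min (ρ z) (ρ (Φ^[1] z)) := by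
      rw [sig_mul Φ ρ hρpos (le_refl 1) z]
      refine congrArg₂ min rfl ?_
      refine Eq.trans (Finset.sup'_congr _ (Finset.Icc_self 1) (fun _ _ => rfl)) ?_
      rw [Finset.sup'_singleton]
    have e2 : ρ (Φ^[1] z) * Sig Φ ρ 1 w = min (ρ (Φ^[1] z)) (ρ z) := by
      rw [← hρw, sig_mul Φ ρ hρpos (le_refl 1) w, hρw]
      refine congrArg₂ min rfl ?_
      refine Eq.trans (Finset.sup'_congr _ (Finset.Icc_self 1) (fun _ _ => rfl)) ?_
      rw [Finset.sup'_singleton]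
      exact hrw 1 (le_refl 1)
    have h0 : ∀ y, Sig Φ ρ 0 y = 0 := fun y => by rw [Sig]; norm_num
    rw [pAcc, pAcc, show (1:ℕ) - 1 = 0 from rfl, h0, h0, sub_zero, sub_zero,
      e1, e2]
    exact min_comm _ _
  · -- 2 ≤ k
    have hk2 : 2 ≤ k := h2
    have hk1 : 1 ≤ k - 1 := by omega
    set g : ℕ → ℝ := fun i => ρ (Φ^[i] z) with hg
    set M : ℝ := (Finset.Icc 1 (k-1)).sup' (Finset.nonempty_Icc.mpr hk1) g with hM
    have hρw : ρ w = ρ (Φ^[k] z) := by rw [hw, hρF]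
    have hA : ρ z * Sig Φ ρ k z = min (g 0) (g k ⊔ M) := by
      rw [sig_mul Φ ρ hρpos hk z]
      refine congrArg₂ min rfl ?_
      exact sup'_split_top g hk2
    have hB : ρ z * Sig Φ ρ (k-1) z = min (g 0) M := by
      rw [sig_mul Φ ρ hρpos hk1 z]; rfl
    have hsupw : ∀ {m : ℕ} (hm : 1 ≤ m) (hmk : m ≤ k),
        (Finset.Icc 1 m).sup' (Finset.nonempty_Icc.mpr hm) (fun j => ρ (Φ^[j] w)) =
        (Finset.Icc (k - m) (k - 1)).sup'
          (Finset.nonempty_Icc.mpr (by omega)) g := by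
      intro m hm hmk
      rw [Finset.sup'_congr (Finset.nonempty_Icc.mpr hm) rfl
        (fun j hj => hrw j (le_trans (Finset.mem_Icc.mp hj).2 hmk))]
      exact sup'_reindex g hm hmk
    have hC : ρ (Φ^[k] z) * Sig Φ ρ k w = min (g k) (g 0 ⊔ M) := by
      rw [← hρw, sig_mul Φ ρ hρpos hk w, hρw]
      refine congrArg₂ min rfl ?_
      rw [hsupw hk (le_refl k)]
      have hIcc : Finset.Icc (k - k) (k - 1) = Finset.Icc 0 (k - 1) := by
        congr 1; omega
      exact Eq.trans (Finset.sup'_congr _ hIcc (fun _ _ => rfl))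
        (sup'_split_bot g hk2)
    have hD : ρ (Φ^[k] z) * Sig Φ ρ (k-1) w = min (g k) M := by
      rw [← hρw, sig_mul Φ ρ hρpos hk1 w, hρw]
      refine congrArg₂ min rfl ?_
      rw [hsupw hk1 (by omega)]
      have hIcc : Finset.Icc (k - (k-1)) (k - 1) = Finset.Icc 1 (k - 1) := by
        congr 1; omega
      exact Finset.sup'_congr _ hIcc (fun _ _ => rfl)
    simp only [pAcc, mul_sub]
    rw [hA, hB, hC, hD]
    exact minmax_id (g 0) (g k) M

/-- The extra-chance accept/reject kernel `D`: from `z`, move to `Φ^k(z)` with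
probability `p^{(k)}(z)` for `k = 1, …, K+1`, and to `F(z)` with the remaining
probability `1 - Σ^{(K+1)}(z)`. -/
noncomputable def Dker {d : ℕ} (K : ℕ) (Φ : PhaseSpace d → PhaseSpace d)
    (ρ : PhaseSpace d → ℝ) (z : PhaseSpace d) : Measure (PhaseSpace d) :=
  (∑ k ∈ Finset.Icc 1 (K + 1),
      ENNReal.ofReal (pAcc Φ ρ k z) • Measure.dirac (Φ^[k] z)) +
    ENNReal.ofReal (1 - Sig Φ ρ (K + 1) z) • Measure.dirac (flipMap d z)

lemma lintegral_Dker {d K : ℕ} {Φ : PhaseSpace d → PhaseSpace d}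
    {ρ : PhaseSpace d → ℝ} (z : PhaseSpace d) {g : PhaseSpace d → ENNReal}
    (hg : Measurable g) :
    ∫⁻ w, g w ∂(Dker K Φ ρ z) =
      (∑ k ∈ Finset.Icc 1 (K+1), ENNReal.ofReal (pAcc Φ ρ k z) * g (Φ^[k] z)) +
        ENNReal.ofReal (1 - Sig Φ ρ (K+1) z) * g (flipMap d z) := by
  rw [Dker, lintegral_add_measure, lintegral_finset_sum_measure]
  simp only [lintegral_smul_measure, lintegral_dirac' _ hg, smul_eq_mul]

lemma Dker_measurable {d : ℕ} (K : ℕ) {Φ : PhaseSpace d → PhaseSpace d}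
    {ρ : PhaseSpace d → ℝ} (hρm : Measurable ρ) (hΦm : Measurable Φ) :
    Measurable (Dker K Φ ρ) := by
  apply Measure.measurable_of_measurable_coe
  intro s hs
  simp only [Dker, Measure.coe_add, Pi.add_apply, Measure.coe_smul, Pi.smul_apply,
    Measure.finset_sum_apply, Measure.dirac_apply' _ hs, smul_eq_mul]
  refine Measurable.add ?_ ?_
  · refine Finset.measurable_sum _ (fun k _ => ?_)
    exact ((pAcc_measurable Φ ρ hρm hΦm k).ennreal_ofReal).mul
      ((measurable_one.indicator hs).comp (hΦm.iterate k))
  · exact ((measurable_const.sub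
        (sig_measurable Φ ρ hρm hΦm (K+1))).ennreal_ofReal).mul
      ((measurable_one.indicator hs).comp flip_measurable)

lemma Dker_univ {d : ℕ} (K : ℕ) {Φ : PhaseSpace d → PhaseSpace d}
    {ρ : PhaseSpace d → ℝ} (hρpos : ∀ z, 0 < ρ z) (z : PhaseSpace d) :
    Dker K Φ ρ z Set.univ = 1 := by
  have h := lintegral_Dker (K := K) (Φ := Φ) (ρ := ρ) z
    (g := fun _ => (1:ENNReal)) measurable_const
  rw [lintegral_one] at h
  rw [h]
  simp only [mul_one]
  have hsum : ∑ k ∈ Finset.Icc 1 (K+1), ENNReal.ofReal (pAcc Φ ρ k z)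
      = ENNReal.ofReal (Sig Φ ρ (K+1) z) := by
    rw [← ENNReal.ofReal_sum_of_nonneg (fun k _ => pAcc_nonneg Φ ρ hρpos k z)]
    congr 1
    rw [show Finset.Icc 1 (K+1) = Finset.Ico 1 (K+2) from (Finset.Ico_add_one_right_eq_Icc (a := 1) (b := K+1)).symm,
      Finset.sum_Ico_eq_sum_range]
    have h2 : ∀ i, pAcc Φ ρ (1 + i) z = Sig Φ ρ (i+1) z - Sig Φ ρ i z := by
      intro i
      rw [pAcc]
      congr 2 <;> omega
    simp only [h2, show K + 2 - 1 = K + 1 from rfl]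
    rw [Finset.sum_range_sub (fun i => Sig Φ ρ i z)]
    simp [Sig]
  rw [hsum, ← ENNReal.ofReal_add (sig_nonneg Φ ρ hρpos _ z)
    (by linarith [sig_le_one Φ ρ (K+1) z])]
  norm_num

lemma accept_term_eq {d : ℕ} {Φ : PhaseSpace d → PhaseSpace d} {ρ : PhaseSpace d → ℝ}
    (hΦrev : ∀ z, Φ (flipMap d (Φ (flipMap d z))) = z)
    (hΦpres : MeasurePreserving Φ (volume : Measure (PhaseSpace d)) volume)
    (hρm : Measurable ρ) (hρpos : ∀ z, 0 < ρ z)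
    (hρF : ∀ z, ρ (flipMap d z) = ρ z)
    {k : ℕ} (hk : 1 ≤ k) {f : PhaseSpace d → PhaseSpace d → ENNReal}
    (hf : Measurable (Function.uncurry f)) :
    ∫⁻ z, ENNReal.ofReal (ρ z) * (ENNReal.ofReal (pAcc Φ ρ k z) * f z (Φ^[k] z)) =
    ∫⁻ z', ENNReal.ofReal (ρ (flipMap d z')) *
      (ENNReal.ofReal (pAcc Φ ρ k (flipMap d z')) *
        f (flipMap d (Φ^[k] (flipMap d z'))) z') := by
  have hΦm : Measurable Φ := hΦpres.measurable
  have hA'm : Measurable (fun z' => ENNReal.ofReal (ρ (flipMap d z')) *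
      (ENNReal.ofReal (pAcc Φ ρ k (flipMap d z')) *
        f (flipMap d (Φ^[k] (flipMap d z'))) z')) := by
    refine ((hρm.comp flip_measurable).ennreal_ofReal).mul ?_
    refine (((pAcc_measurable Φ ρ hρm hΦm k).comp flip_measurable).ennreal_ofReal).mul ?_
    exact hf.comp ((flip_measurable.comp
      ((hΦm.iterate k).comp flip_measurable)).prodMk measurable_id)
  rw [← (hΦpres.iterate k).lintegral_comp hA'm]
  refine lintegral_congr (fun z => ?_)
  have h3 : flipMap d (Φ^[k] (flipMap d (Φ^[k] z))) = z := by
    rw [iter_flip_iter hΦrev (le_refl k) z, Nat.sub_self,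
      Function.iterate_zero_apply, flipMap_flipMap]
  have h5 : ENNReal.ofReal (ρ (flipMap d (Φ^[k] z))) *
      ENNReal.ofReal (pAcc Φ ρ k (flipMap d (Φ^[k] z)))
      = ENNReal.ofReal (ρ z) * ENNReal.ofReal (pAcc Φ ρ k z) := by
    rw [← ENNReal.ofReal_mul (hρpos _).le, ← ENNReal.ofReal_mul (hρpos _).le,
      hρF, ← key_identity hΦrev hρpos hρF hk z]
  show ENNReal.ofReal (ρ z) * (ENNReal.ofReal (pAcc Φ ρ k z) * f z (Φ^[k] z))
      = ENNReal.ofReal (ρ (flipMap d (Φ^[k] z))) *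
        (ENNReal.ofReal (pAcc Φ ρ k (flipMap d (Φ^[k] z))) *
          f (flipMap d (Φ^[k] (flipMap d (Φ^[k] z)))) (Φ^[k] z))
  rw [h3, ← mul_assoc, ← mul_assoc, h5]

lemma flip_term_eq {d K : ℕ} {Φ : PhaseSpace d → PhaseSpace d} {ρ : PhaseSpace d → ℝ}
    (hρm : Measurable ρ) (hΦm : Measurable Φ)
    {f : PhaseSpace d → PhaseSpace d → ENNReal}
    (hf : Measurable (Function.uncurry f)) :
    ∫⁻ z, ENNReal.ofReal (ρ z) *
        (ENNReal.ofReal (1 - Sig Φ ρ (K+1) z) * f z (flipMap d z)) =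
    ∫⁻ z', ENNReal.ofReal (ρ (flipMap d z')) *
      (ENNReal.ofReal (1 - Sig Φ ρ (K+1) (flipMap d z')) *
        f (flipMap d (flipMap d (flipMap d z'))) z') := by
  have hB'm : Measurable (fun z' => ENNReal.ofReal (ρ (flipMap d z')) *
      (ENNReal.ofReal (1 - Sig Φ ρ (K+1) (flipMap d z')) *
        f (flipMap d (flipMap d (flipMap d z'))) z')) := by
    refine ((hρm.comp flip_measurable).ennreal_ofReal).mul ?_
    refine (((measurable_const.sub (sig_measurable Φ ρ hρm hΦm (K+1))).comp
      flip_measurable).ennreal_ofReal).mul ?_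
    exact hf.comp ((flip_measurable.comp (flip_measurable.comp
      flip_measurable)).prodMk measurable_id)
  rw [← flip_mp.lintegral_comp hB'm]
  refine lintegral_congr (fun z => ?_)
  simp only [flipMap_flipMap]


/-- The extra-chance kernel `D` satisfies modified detailed balance with
respect to `ρ`, and consequently `ρ` is an invariant density of `D`. -/
theorem xcghmc_modified_detailed_balance_and_invariance
    (d K : ℕ) (hd : 1 ≤ d)
    (Φ : PhaseSpace d → PhaseSpace d) (hΦbij : Function.Bijective Φ)
    (hΦrev : ∀ z, Φ (flipMap d (Φ (flipMap d z))) = z)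
    (hΦpres : MeasurePreserving Φ
      (volume : Measure (PhaseSpace d)) volume)
    (ρ : PhaseSpace d → ℝ) (hρm : Measurable ρ)
    (hρpos : ∀ z, 0 < ρ z) (hρF : ∀ z, ρ (flipMap d z) = ρ z) :
    (∀ f : PhaseSpace d → PhaseSpace d → ENNReal,
      Measurable (Function.uncurry f) →
      ∫⁻ z, ENNReal.ofReal (ρ z) * ∫⁻ w, f z w ∂(Dker K Φ ρ z) =
        ∫⁻ z', ENNReal.ofReal (ρ (flipMap d z')) *
          ∫⁻ w, f (flipMap d w) z' ∂(Dker K Φ ρ (flipMap d z'))) ∧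
    ((volume : Measure (PhaseSpace d)).withDensity
        (fun z => ENNReal.ofReal (ρ z))).bind (Dker K Φ ρ) =
      (volume : Measure (PhaseSpace d)).withDensity
        (fun z => ENNReal.ofReal (ρ z)) := by
  have hΦm : Measurable Φ := hΦpres.measurable
  have hDB : ∀ f : PhaseSpace d → PhaseSpace d → ENNReal,
      Measurable (Function.uncurry f) →
      ∫⁻ z, ENNReal.ofReal (ρ z) * ∫⁻ w, f z w ∂(Dker K Φ ρ z) =
        ∫⁻ z', ENNReal.ofReal (ρ (flipMap d z')) *
          ∫⁻ w, f (flipMap d w) z' ∂(Dker K Φ ρ (flipMap d z')) := by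
    intro f hf
    have hfz : ∀ z : PhaseSpace d, Measurable (f z) :=
      fun z => hf.comp measurable_prodMk_left
    have hgz : ∀ z' : PhaseSpace d, Measurable (fun w => f (flipMap d w) z') :=
      fun z' => hf.comp (flip_measurable.prodMk measurable_const)
    have hAm : ∀ k : ℕ, Measurable (fun z => ENNReal.ofReal (ρ z) *
        (ENNReal.ofReal (pAcc Φ ρ k z) * f z (Φ^[k] z))) := fun k =>
      (hρm.ennreal_ofReal).mul (((pAcc_measurable Φ ρ hρm hΦm k).ennreal_ofReal).mul
        (hf.comp (measurable_id.prodMk (hΦm.iterate k))))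
    have hBm : Measurable (fun z => ENNReal.ofReal (ρ z) *
        (ENNReal.ofReal (1 - Sig Φ ρ (K+1) z) * f z (flipMap d z))) :=
      (hρm.ennreal_ofReal).mul (((measurable_const.sub
        (sig_measurable Φ ρ hρm hΦm (K+1))).ennreal_ofReal).mul
        (hf.comp (measurable_id.prodMk flip_measurable)))
    have hA'm : ∀ k : ℕ, Measurable (fun z' => ENNReal.ofReal (ρ (flipMap d z')) *
        (ENNReal.ofReal (pAcc Φ ρ k (flipMap d z')) *
          f (flipMap d (Φ^[k] (flipMap d z'))) z')) := fun k =>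
      ((hρm.comp flip_measurable).ennreal_ofReal).mul
        ((((pAcc_measurable Φ ρ hρm hΦm k).comp flip_measurable).ennreal_ofReal).mul
          (hf.comp ((flip_measurable.comp
            ((hΦm.iterate k).comp flip_measurable)).prodMk measurable_id)))
    have hB'm : Measurable (fun z' => ENNReal.ofReal (ρ (flipMap d z')) *
        (ENNReal.ofReal (1 - Sig Φ ρ (K+1) (flipMap d z')) *
          f (flipMap d (flipMap d (flipMap d z'))) z')) :=
      ((hρm.comp flip_measurable).ennreal_ofReal).mul
        ((((measurable_const.sub (sig_measurable Φ ρ hρm hΦm (K+1))).comp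
            flip_measurable).ennreal_ofReal).mul
          (hf.comp ((flip_measurable.comp (flip_measurable.comp
            flip_measurable)).prodMk measurable_id)))
    calc ∫⁻ z, ENNReal.ofReal (ρ z) * ∫⁻ w, f z w ∂(Dker K Φ ρ z)
        = ∫⁻ z, (∑ k ∈ Finset.Icc 1 (K+1), ENNReal.ofReal (ρ z) *
              (ENNReal.ofReal (pAcc Φ ρ k z) * f z (Φ^[k] z))) +
            ENNReal.ofReal (ρ z) *
              (ENNReal.ofReal (1 - Sig Φ ρ (K+1) z) * f z (flipMap d z)) := by
          refine lintegral_congr (fun z => ?_)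
          rw [lintegral_Dker z (hfz z), mul_add, Finset.mul_sum]
      _ = (∑ k ∈ Finset.Icc 1 (K+1), ∫⁻ z, ENNReal.ofReal (ρ z) *
              (ENNReal.ofReal (pAcc Φ ρ k z) * f z (Φ^[k] z))) +
            ∫⁻ z, ENNReal.ofReal (ρ z) *
              (ENNReal.ofReal (1 - Sig Φ ρ (K+1) z) * f z (flipMap d z)) := by
          rw [lintegral_add_right _ hBm, lintegral_finset_sum _ (fun k _ => hAm k)]
      _ = (∑ k ∈ Finset.Icc 1 (K+1), ∫⁻ z', ENNReal.ofReal (ρ (flipMap d z')) *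
              (ENNReal.ofReal (pAcc Φ ρ k (flipMap d z')) *
                f (flipMap d (Φ^[k] (flipMap d z'))) z')) +
            ∫⁻ z', ENNReal.ofReal (ρ (flipMap d z')) *
              (ENNReal.ofReal (1 - Sig Φ ρ (K+1) (flipMap d z')) *
                f (flipMap d (flipMap d (flipMap d z'))) z') := by
          congr 1
          · refine Finset.sum_congr rfl (fun k hk => ?_)
            exact accept_term_eq hΦrev hΦpres hρm hρpos hρF
              (Finset.mem_Icc.mp hk).1 hf
          · exact flip_term_eq hρm hΦm hf
      _ = ∫⁻ z', (∑ k ∈ Finset.Icc 1 (K+1), ENNReal.ofReal (ρ (flipMap d z')) *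
              (ENNReal.ofReal (pAcc Φ ρ k (flipMap d z')) *
                f (flipMap d (Φ^[k] (flipMap d z'))) z')) +
            ENNReal.ofReal (ρ (flipMap d z')) *
              (ENNReal.ofReal (1 - Sig Φ ρ (K+1) (flipMap d z')) *
                f (flipMap d (flipMap d (flipMap d z'))) z') := by
          rw [lintegral_add_right _ hB'm, lintegral_finset_sum _ (fun k _ => hA'm k)]
      _ = ∫⁻ z', ENNReal.ofReal (ρ (flipMap d z')) *
            ∫⁻ w, f (flipMap d w) z' ∂(Dker K Φ ρ (flipMap d z')) := by
          refine lintegral_congr (fun z' => ?_)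
          rw [lintegral_Dker (flipMap d z') (hgz z'), mul_add, Finset.mul_sum]
  refine ⟨hDB, ?_⟩
  ext s hs
  have hDm : Measurable (Dker K Φ ρ) := Dker_measurable K hρm hΦm
  have hcoe : Measurable (fun z => Dker K Φ ρ z s) :=
    (Measure.measurable_coe hs).comp hDm
  rw [Measure.bind_apply hs hDm.aemeasurable,
    lintegral_withDensity_eq_lintegral_mul volume hρm.ennreal_ofReal hcoe]
  have hind : Measurable (Function.uncurry
      (fun (_ : PhaseSpace d) w => s.indicator (1 : PhaseSpace d → ENNReal) w)) :=
    (measurable_one.indicator hs).comp measurable_snd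
  have h1 := hDB (fun _ w => s.indicator 1 w) hind
  calc ∫⁻ z, ((fun z => ENNReal.ofReal (ρ z)) * fun z => Dker K Φ ρ z s) z ∂volume
      = ∫⁻ z, ENNReal.ofReal (ρ z) *
          ∫⁻ w, s.indicator 1 w ∂(Dker K Φ ρ z) := by
        refine lintegral_congr fun z => ?_
        simp only [Pi.mul_apply]
        rw [lintegral_indicator_one hs]
    _ = ∫⁻ z', ENNReal.ofReal (ρ (flipMap d z')) *
          ∫⁻ _, s.indicator 1 z' ∂(Dker K Φ ρ (flipMap d z')) := h1
    _ = ∫⁻ z', ENNReal.ofReal (ρ z') * s.indicator 1 z' := by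
        refine lintegral_congr fun z' => ?_
        rw [lintegral_const, Dker_univ K hρpos, mul_one, hρF]
    _ = ∫⁻ z' in s, ENNReal.ofReal (ρ z') ∂volume := by
        rw [← lintegral_indicator hs]
        refine lintegral_congr fun z' => ?_
        by_cases h : z' ∈ s <;> simp [h]
    _ = (volume.withDensity fun z => ENNReal.ofReal (ρ z)) s :=
        (withDensity_apply _ hs).symm
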